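/- In the group G = ⟨a, b | [a,b] = 1⟩ ≅ ℤ × ℤ with H = ⟨a⟩ and relative generating set X = {b^{±1}}, the word Wₙ = [aⁿ, b] = a⁻ⁿb⁻¹aⁿb has length 4 as a word over X ∪ (H \ {1}) for every n ≥ 1, yet Wₙ represents the identity in G and every expression of Wₙ as a product of conjugates of the relator [a,b]^{±1} in the free product ⟨a⟩ ∗ F(b) requires at least n factors. Hence the relative Dehn function of ℤ² with respect to ⟨a⟩ and X = {b^{±1}} (with relator set {[a,b]}) is not well-defined. -/

import Mathlib

/-- The area of `w` with respect to the relator set `R`: the least `k` such that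
`w` is a product of `k` conjugates of elements of `R^{±1}`. -/
noncomputable def relArea {F : Type*} [Group F] (R : Set F) (w : F) : ℕ :=
  sInf {k | ∃ l : List F, l.length = k ∧
    (∀ x ∈ l, ∃ f r : F, (r ∈ R ∨ r⁻¹ ∈ R) ∧ x = f⁻¹ * r * f) ∧ l.prod = w}

/-- The free product `F = ⟨a⟩ ∗ F(b) ≅ ℤ ∗ ℤ`. -/
abbrev F2 : Type := FreeGroup Bool

/-- The generator `a` (generating the subgroup `H`). -/
def fa : F2 := FreeGroup.of true

/-- The generator `b` (the relative generating set is `X = {b^{±1}}`). -/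
def fb : F2 := FreeGroup.of false

/-- The alphabet `X ∪ (H \ {1})`: the letters `b^{±1}` together with `a^k`, `k ≠ 0`. -/
def relAlphabet : Set F2 :=
  {x | x = fb ∨ x = fb⁻¹ ∨ ∃ k : ℤ, k ≠ 0 ∧ x = fa ^ k}

open scoped commutatorElement

/-- The integer Heisenberg group, used to certify area lower bounds. -/
@[ext] structure Heis where
  x : ℤ
  y : ℤ
  z : ℤ

namespace Heis

instance : Mul Heis := ⟨fun p q => ⟨p.x + q.x, p.y + q.y, p.z + q.z + p.x * q.y⟩⟩
instance : One Heis := ⟨⟨0, 0, 0⟩⟩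
instance : Inv Heis := ⟨fun p => ⟨-p.x, -p.y, -p.z + p.x * p.y⟩⟩

lemma mul_def (p q : Heis) : p * q = ⟨p.x + q.x, p.y + q.y, p.z + q.z + p.x * q.y⟩ := rfl
lemma one_def : (1 : Heis) = ⟨0, 0, 0⟩ := rfl
lemma inv_def (p : Heis) : p⁻¹ = ⟨-p.x, -p.y, -p.z + p.x * p.y⟩ := rfl

instance : Group Heis where
  mul_assoc a b c := by ext <;> simp [mul_def] <;> ring
  one_mul a := by ext <;> simp [mul_def, one_def]
  mul_one a := by ext <;> simp [mul_def, one_def]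
  inv_mul_cancel a := by ext <;> simp [mul_def, inv_def, one_def]

def A : Heis := ⟨1, 0, 0⟩
def B : Heis := ⟨0, 1, 0⟩
def Z : Heis := ⟨0, 0, 1⟩

lemma conj_Z (f : Heis) : f⁻¹ * Z * f = Z := by
  ext <;> simp [mul_def, inv_def, Z] <;> ring

lemma conj_Zinv (f : Heis) : f⁻¹ * Z⁻¹ * f = Z⁻¹ := by
  ext <;> simp [mul_def, inv_def, Z] <;> ring

lemma A_pow (n : ℕ) : A ^ n = ⟨n, 0, 0⟩ := by
  induction n with
  | zero => ext <;> simp [one_def]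
  | succ k ih =>
    rw [pow_succ, ih]
    ext <;> simp [mul_def, A] <;> push_cast <;> ring

lemma comm_AB : ⁅A, B⁆ = Z := by
  ext <;> simp [commutatorElement_def, mul_def, inv_def, A, B, Z]

lemma comm_An_B (n : ℕ) : ⁅A ^ n, B⁆ = ⟨0, 0, n⟩ := by
  ext <;> simp [commutatorElement_def, A_pow, mul_def, inv_def, B]

lemma prod_pm (l : List Heis) (h : ∀ x ∈ l, x = Z ∨ x = Z⁻¹) :
    ∃ s : ℤ, l.prod = ⟨0, 0, s⟩ ∧ s.natAbs ≤ l.length := by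
  induction l with
  | nil => exact ⟨0, rfl, le_refl 0⟩
  | cons a t ih =>
    obtain ⟨s, hs, hle⟩ := ih fun x hx => h x (List.mem_cons_of_mem a hx)
    rcases h a List.mem_cons_self with ha | ha
    · refine ⟨1 + s, ?_, ?_⟩
      · simp only [List.prod_cons, hs, ha]
        ext <;> simp [mul_def, Z]
      · calc (1 + s).natAbs ≤ (1 : ℤ).natAbs + s.natAbs := Int.natAbs_add_le 1 s
          _ ≤ 1 + t.length := by simpa using hle
          _ = (a :: t).length := by simp [add_comm]
    · refine ⟨-1 + s, ?_, ?_⟩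
      · simp only [List.prod_cons, hs, ha]
        ext <;> simp [mul_def, inv_def, Z]
      · calc (-1 + s).natAbs ≤ (-1 : ℤ).natAbs + s.natAbs := Int.natAbs_add_le _ s
          _ ≤ 1 + t.length := by simpa using hle
          _ = (a :: t).length := by simp [add_comm]

end Heis

/-- The homomorphism `F2 → Heis` sending `a ↦ A`, `b ↦ B`. -/
def φ : F2 →* Heis := FreeGroup.lift (fun t => if t then Heis.A else Heis.B)

lemma phi_fa : φ fa = Heis.A := FreeGroup.lift_apply_of
lemma phi_fb : φ fb = Heis.B := FreeGroup.lift_apply_of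

lemma conj_list_prod (g : F2) (l : List F2) :
    (l.map (fun x => g * x * g⁻¹)).prod = g * l.prod * g⁻¹ := by
  induction l with
  | nil => simp
  | cons a t ih => simp only [List.map_cons, List.prod_cons, ih]; group

/-- `[aⁿ, b]` is a product of `n` conjugates of `[a,b]`. -/
lemma exists_expr (n : ℕ) : ∃ l : List F2, l.length = n ∧
    (∀ x ∈ l, ∃ f r : F2, (r ∈ ({⁅fa, fb⁆} : Set F2) ∨ r⁻¹ ∈ ({⁅fa, fb⁆} : Set F2)) ∧
      x = f⁻¹ * r * f) ∧
    l.prod = ⁅fa ^ n, fb⁆ := by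
  induction n with
  | zero => exact ⟨[], rfl, by simp, by simp⟩
  | succ k ih =>
    obtain ⟨l, hlen, hmem, hprod⟩ := ih
    refine ⟨l.map (fun x => fa * x * fa⁻¹) ++ [⁅fa, fb⁆], by simp [hlen], ?_, ?_⟩
    · intro x hx
      rcases List.mem_append.mp hx with hx | hx
      · obtain ⟨y, hy, rfl⟩ := List.mem_map.mp hx
        obtain ⟨f, r, hr, rfl⟩ := hmem y hy
        exact ⟨f * fa⁻¹, r, hr, by group⟩
      · rw [List.mem_singleton] at hx; subst hx
        exact ⟨1, ⁅fa, fb⁆, Or.inl rfl, by group⟩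
    · rw [List.prod_append, conj_list_prod, hprod]
      simp only [List.prod_singleton, commutatorElement_def, pow_succ]
      group

lemma comm_mem_closure (n : ℕ) :
    ⁅fa ^ n, fb⁆ ∈ Subgroup.normalClosure {⁅fa, fb⁆} := by
  obtain ⟨l, -, hmem, hprod⟩ := exists_expr n
  rw [← hprod]
  refine list_prod_mem fun x hx => ?_
  obtain ⟨f, r, hr, rfl⟩ := hmem x hx
  have hN : (Subgroup.normalClosure {⁅fa, fb⁆}).Normal := Subgroup.normalClosure_normal
  have hr' : r ∈ Subgroup.normalClosure {⁅fa, fb⁆} := by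
    rcases hr with hr | hr
    · exact Subgroup.subset_normalClosure hr
    · simpa using (Subgroup.normalClosure {⁅fa, fb⁆}).inv_mem
        (Subgroup.subset_normalClosure hr)
  simpa using hN.conj_mem r hr' f⁻¹

lemma area_lower (n : ℕ) : n ≤ relArea {⁅fa, fb⁆} ⁅fa ^ n, fb⁆ := by
  apply le_csInf
  · obtain ⟨l, hlen, hmem, hprod⟩ := exists_expr n
    exact ⟨n, l, hlen, hmem, hprod⟩
  · rintro k ⟨l, hlen, hmem, hprod⟩
    have hZ : ∀ x ∈ l.map φ, x = Heis.Z ∨ x = Heis.Z⁻¹ := by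
      intro y hy
      obtain ⟨x, hx, rfl⟩ := List.mem_map.mp hy
      obtain ⟨f, r, hr, rfl⟩ := hmem x hx
      have hc : φ ⁅fa, fb⁆ = Heis.Z := by
        rw [map_commutatorElement, phi_fa, phi_fb, Heis.comm_AB]
      rcases hr with hr | hr
      · rw [Set.mem_singleton_iff] at hr; subst hr
        left
        rw [map_mul, map_mul, map_inv, hc, Heis.conj_Z]
      · rw [Set.mem_singleton_iff] at hr
        have : r = ⁅fa, fb⁆⁻¹ := by rw [← hr, inv_inv]
        subst this
        right
        rw [map_mul, map_mul, map_inv, map_inv, hc, Heis.conj_Zinv]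
    obtain ⟨s, hs, hle⟩ := Heis.prod_pm (l.map φ) hZ
    have hp : (l.map φ).prod = ⟨0, 0, (n : ℤ)⟩ := by
      rw [← map_list_prod φ l, hprod, map_commutatorElement, map_pow, phi_fa, phi_fb,
        Heis.comm_An_B]
    have hsn : s = (n : ℤ) := by
      have := hs.symm.trans hp
      exact congrArg Heis.z this
    rw [hsn] at hle
    simpa [hlen] using hle

theorem relative_dehn_function_not_well_defined :
    (∀ n : ℕ, 1 ≤ n →
      ∃ W : List F2, W.length = 4 ∧ (∀ x ∈ W, x ∈ relAlphabet) ∧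
        W.prod = ⁅fa ^ n, fb⁆ ∧
        ⁅fa ^ n, fb⁆ ∈ Subgroup.normalClosure {⁅fa, fb⁆} ∧
        n ≤ relArea {⁅fa, fb⁆} ⁅fa ^ n, fb⁆) ∧
    ¬ ∃ D : ℕ → ℕ, ∀ W : List F2, (∀ x ∈ W, x ∈ relAlphabet) →
        W.prod ∈ Subgroup.normalClosure {⁅fa, fb⁆} →
        relArea {⁅fa, fb⁆} W.prod ≤ D W.length := by
  have part1 : ∀ n : ℕ, 1 ≤ n →
      ∃ W : List F2, W.length = 4 ∧ (∀ x ∈ W, x ∈ relAlphabet) ∧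
        W.prod = ⁅fa ^ n, fb⁆ ∧
        ⁅fa ^ n, fb⁆ ∈ Subgroup.normalClosure {⁅fa, fb⁆} ∧
        n ≤ relArea {⁅fa, fb⁆} ⁅fa ^ n, fb⁆ := by
    intro n hn
    refine ⟨[fa ^ (n : ℤ), fb, fa ^ (-(n : ℤ)), fb⁻¹], rfl, ?_, ?_,
      comm_mem_closure n, area_lower n⟩
    · intro x hx
      have hne : (n : ℤ) ≠ 0 := by exact_mod_cast Nat.one_le_iff_ne_zero.mp hn
      fin_cases hx
      · exact Or.inr (Or.inr ⟨(n : ℤ), hne, rfl⟩)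
      · exact Or.inl rfl
      · exact Or.inr (Or.inr ⟨-(n : ℤ), neg_ne_zero.mpr hne, rfl⟩)
      · exact Or.inr (Or.inl rfl)
    · simp [commutatorElement_def, zpow_natCast, zpow_neg, mul_assoc]
  refine ⟨part1, ?_⟩
  rintro ⟨D, hD⟩
  obtain ⟨W, hlen, halpha, hprod, hmem, hlow⟩ := part1 (D 4 + 1) (by omega)
  have h := hD W halpha (by rw [hprod]; exact hmem)
  rw [hprod, hlen] at h
  omega
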